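/- Let Γ = (ℤ/2)³ with λ(x,y) = (−1)^{⟨x,y⟩} where ⟨x,y⟩ = x₁y₁+x₂y₂+x₃y₃. Define σ(x,y) := (−1)^{x₁(y₂+y₃)+x₂y₃}. Then σ is a biadditive multiplier and λ^σ(x,y) := λ(x,y)σ(x,y)σ(y,x)^{−1} = 1 for all x,y in the subgroup Γ₀ = {x : ⟨x,x⟩ even} = {(0,0,0),(0,1,1),(1,0,1),(1,1,0)}. -/

import Mathlib

/-- The standard pairing on (ℤ/2)³. -/
def ip8 (x y : Fin 3 → ZMod 2) : ZMod 2 := x 0 * y 0 + x 1 * y 1 + x 2 * y 2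

/-- The commutation factor λ(x,y) = (−1)^⟨x,y⟩ on (ℤ/2)³. -/
def lam8 (x y : Fin 3 → ZMod 2) : ℝ := (-1) ^ (ip8 x y).val

/-- The multiplier σ(x,y) = (−1)^{x₁(y₂+y₃)+x₂y₃}. -/
def sig8 (x y : Fin 3 → ZMod 2) : ℝ := (-1) ^ (x 0 * (y 1 + y 2) + x 1 * y 2).val

lemma f8_add (a b : ZMod 2) : ((-1:ℝ))^(a+b).val = (-1)^a.val * (-1)^b.val := by
  rcases (by decide : ∀ c : ZMod 2, c = 0 ∨ c = 1) a with rfl | rfl <;> rcases (by decide : ∀ c : ZMod 2, c = 0 ∨ c = 1) b with rfl | rfl <;> norm_num [show ZMod.val (2:ZMod 2)=0 from rfl, show ZMod.val (1:ZMod 2)=1 from rfl, show ZMod.val (0:ZMod 2)=0 from rfl, show (1+1:ZMod 2) = 0 from rfl]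

lemma f8_inv (a : ZMod 2) : (((-1:ℝ))^a.val)⁻¹ = (-1)^a.val := by
  rcases (by decide : ∀ c : ZMod 2, c = 0 ∨ c = 1) a with rfl | rfl <;> norm_num [show ZMod.val (1:ZMod 2)=1 from rfl, show ZMod.val (0:ZMod 2)=0 from rfl]

/-- σ(x,y) = (−1)^{x₁(y₂+y₃)+x₂y₃} is a biadditive multiplier on Γ = (ℤ/2)³ and
λ^σ(x,y) = λ(x,y)σ(x,y)σ(y,x)⁻¹ = 1 for all x,y in the even subgroup
Γ₀ = {x : ⟨x,x⟩ = 0} = {(0,0,0),(0,1,1),(1,0,1),(1,1,0)}. -/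
theorem quaternion_multiplier_trivializes_even_part :
    (∀ x y z : Fin 3 → ZMod 2, sig8 (x + y) z = sig8 x z * sig8 y z) ∧
    (∀ x y z : Fin 3 → ZMod 2, sig8 x (y + z) = sig8 x y * sig8 x z) ∧
    (∀ x y : Fin 3 → ZMod 2, ip8 x x = 0 → ip8 y y = 0 →
      lam8 x y * sig8 x y * (sig8 y x)⁻¹ = 1) := by
  refine ⟨?_, ?_, ?_⟩
  · intro x y z
    unfold sig8
    rw [← f8_add]
    have : ∀ x y z : Fin 3 → ZMod 2,
        (x + y) 0 * (z 1 + z 2) + (x + y) 1 * z 2 =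
        (x 0 * (z 1 + z 2) + x 1 * z 2) + (y 0 * (z 1 + z 2) + y 1 * z 2) := by decide
    exact congrArg (fun t : ZMod 2 => ((-1:ℝ))^t.val) (this x y z)
  · intro x y z
    unfold sig8
    rw [← f8_add]
    have : ∀ x y z : Fin 3 → ZMod 2,
        x 0 * ((y + z) 1 + (y + z) 2) + x 1 * (y + z) 2 =
        (x 0 * (y 1 + y 2) + x 1 * y 2) + (x 0 * (z 1 + z 2) + x 1 * z 2) := by decide
    exact congrArg (fun t : ZMod 2 => ((-1:ℝ))^t.val) (this x y z)
  · intro x y hx hy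
    unfold lam8 sig8
    rw [f8_inv, ← f8_add, ← f8_add]
    have : ∀ x y : Fin 3 → ZMod 2, ip8 x x = 0 → ip8 y y = 0 →
        ip8 x y + (x 0 * (y 1 + y 2) + x 1 * y 2) + (y 0 * (x 1 + x 2) + y 1 * x 2) = 0 := by
      decide
    rw [this x y hx hy]
    norm_num
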